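/- Let A be a commutative ring, d a positive integer, and B a commutative A-algebra which is finite locally free of rank d as an A-module. Let I be the kernel of the canonical A-linear map π : B^{⊗d} → ⋀^d_A B. Then I is stable under multiplication by S_d-invariant elements: for every s ∈ S^d_A(B) and every x ∈ I one has s·x ∈ I. Consequently, multiplication in B^{⊗d} induces an S^d_A(B)-module structure on ⋀^d_A B for which π is S^d_A(B)-linear. -/

import Mathlib

open scoped TensorProduct

/-- The canonical `A`-linear map `B^{⊗d} → ⋀^d_A B` sending `b₁ ⊗ ⋯ ⊗ b_d` to
`b₁ ∧ ⋯ ∧ b_d`. -/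
noncomputable def tensorPowerToExteriorPower (A : Type*) [CommRing A] (B : Type*) [CommRing B]
    [Algebra A B] (d : ℕ) : (⨂[A] (_ : Fin d), B) →ₗ[A] ⋀[A]^d B :=
  PiTensorProduct.lift
    (((ExteriorAlgebra.ιMulti A d (M := B)).codRestrict (⋀[A]^d B)
      (fun v => ExteriorAlgebra.ιMulti_range A d (Set.mem_range_self v))).toMultilinearMap)

section Aux

variable (A : Type) [CommRing A] (d n : ℕ)

/-- The coefficient functional on `(A^n)^{⊗ d}` attached to a multi-index `K`. -/
noncomputable def tensorCoeffFn (K : Fin d → Fin n) :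
    (⨂[A] (_ : Fin d), (Fin n → A)) →ₗ[A] A :=
  PiTensorProduct.lift ((MultilinearMap.mkPiAlgebra A (Fin d) A).compLinearMap
    (fun l => LinearMap.proj (K l)))

@[simp] lemma tensorCoeffFn_tprod (K : Fin d → Fin n) (v : Fin d → (Fin n → A)) :
    tensorCoeffFn A d n K (PiTensorProduct.tprod A v) = ∏ l, v l (K l) := by
  simp [tensorCoeffFn]

lemma tensorCoeffFn_expand (u : ⨂[A] (_ : Fin d), (Fin n → A)) :
    u = ∑ K : Fin d → Fin n,
      tensorCoeffFn A d n K u • PiTensorProduct.tprod A (fun l => Pi.single (K l) (1 : A)) := by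
  induction u using PiTensorProduct.induction_on with
  | smul_tprod a v =>
    have hv : v = fun l => ∑ m : Fin n, v l m • (Pi.single m (1 : A) : Fin n → A) := by
      funext l x
      simp [Pi.single_apply, Finset.sum_apply, mul_ite]
    conv_lhs => rw [hv]
    rw [MultilinearMap.map_sum (PiTensorProduct.tprod A)
      (fun l m => v l m • (Pi.single m (1 : A) : Fin n → A))]
    rw [Finset.smul_sum]
    refine Finset.sum_congr rfl fun K _ => ?_
    rw [MultilinearMap.map_smul_univ]
    simp [smul_smul]
  | add x y hx hy =>
    conv_lhs => rw [hx, hy]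
    rw [← Finset.sum_add_distrib]
    refine Finset.sum_congr rfl fun K _ => ?_
    rw [map_add, add_smul]

lemma tensorCoeffFn_reindex (σ : Equiv.Perm (Fin d)) (K : Fin d → Fin n)
    (u : ⨂[A] (_ : Fin d), (Fin n → A)) :
    tensorCoeffFn A d n K
        (PiTensorProduct.reindex A (fun _ : Fin d => (Fin n → A)) σ u) =
      tensorCoeffFn A d n (fun l => K (σ l)) u := by
  induction u using PiTensorProduct.induction_on with
  | smul_tprod a v =>
    rw [map_smul, map_smul, map_smul, PiTensorProduct.reindex_tprod]
    congr 1
    rw [tensorCoeffFn_tprod, tensorCoeffFn_tprod]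
    exact (Equiv.prod_comp σ (fun l => v (σ.symm l) (K l))).symm.trans
      (Finset.prod_congr rfl fun l _ => by simp)
  | add x y hx hy => simp [map_add, hx, hy]

end Aux

section Key

variable (A : Type) [CommRing A] (d : ℕ)
variable (B : Type) [CommRing B] [Algebra A B] [Module.Finite A B] [Module.Projective A B]

/-- Expansion of a symmetric tensor with symmetric coefficients. -/
lemma exists_symm_expansion (s : ⨂[A] (_ : Fin d), B)
    (hs : ∀ σ : Equiv.Perm (Fin d), PiTensorProduct.reindex A (fun _ : Fin d => B) σ s = s) :
    ∃ (n : ℕ) (f : Fin n → B) (c : (Fin d → Fin n) → A),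
      (∀ (σ : Equiv.Perm (Fin d)) (K : Fin d → Fin n), c (fun l => K (σ l)) = c K) ∧
      s = ∑ K : Fin d → Fin n, c K • PiTensorProduct.tprod A (fun l => f (K l)) := by
  obtain ⟨n, p, g, -, -, hpg⟩ := Module.Finite.exists_comp_eq_id_of_projective A B
  set ψ : (⨂[A] (_ : Fin d), B) →ₗ[A] ⨂[A] (_ : Fin d), (Fin n → A) :=
    PiTensorProduct.map (fun _ => g) with hψ
  set φ : (⨂[A] (_ : Fin d), (Fin n → A)) →ₗ[A] ⨂[A] (_ : Fin d), B :=
    PiTensorProduct.map (fun _ => p) with hφ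
  have hφψ : ∀ x, φ (ψ x) = x := by
    intro x
    rw [hφ, hψ, ← LinearMap.comp_apply, ← PiTensorProduct.map_comp]
    have : (fun _ : Fin d => p ∘ₗ g) = fun _ : Fin d => (LinearMap.id : B →ₗ[A] B) := by
      funext _; exact hpg
    rw [this, PiTensorProduct.map_id, LinearMap.id_apply]
  refine ⟨n, fun m => p (Pi.single m 1), fun K => tensorCoeffFn A d n K (ψ s), ?_, ?_⟩
  · intro σ K
    have h1 : PiTensorProduct.reindex A (fun _ : Fin d => (Fin n → A)) σ (ψ s) = ψ s := by
      have := PiTensorProduct.map_reindex (fun _ : Fin d => g) σ s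
      rw [hψ]
      rw [← this]
      rw [hs σ]
    show tensorCoeffFn A d n (fun l => K (σ l)) (ψ s) = tensorCoeffFn A d n K (ψ s)
    rw [← tensorCoeffFn_reindex, h1]
  · conv_lhs => rw [← hφψ s, tensorCoeffFn_expand A d n (ψ s)]
    rw [map_sum]
    refine Finset.sum_congr rfl fun K _ => ?_
    rw [map_smul, hφ, PiTensorProduct.map_tprod]

variable {A B d} in
lemma key_alternating (s : ⨂[A] (_ : Fin d), B)
    (hs : ∀ σ : Equiv.Perm (Fin d), PiTensorProduct.reindex A (fun _ : Fin d => B) σ s = s)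
    (b : Fin d → B) {i j : Fin d} (hij : i ≠ j) (hb : b i = b j) :
    tensorPowerToExteriorPower A B d (s * PiTensorProduct.tprod A b) = 0 := by
  obtain ⟨n, f, c, hc, hsum⟩ := exists_symm_expansion A d B s hs
  rw [hsum, Finset.sum_mul]
  have hterm : ∀ K : Fin d → Fin n,
      (c K • PiTensorProduct.tprod A (fun l => f (K l))) * PiTensorProduct.tprod A b =
        c K • PiTensorProduct.tprod A (fun l => f (K l) * b l) := by
    intro K
    rw [smul_mul_assoc, PiTensorProduct.tprod_mul_tprod]
    rfl
  simp_rw [hterm]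
  rw [map_sum]
  have hπ : ∀ v : Fin d → B,
      ((tensorPowerToExteriorPower A B d (PiTensorProduct.tprod A v) : ⋀[A]^d B) :
        ExteriorAlgebra A B) = ExteriorAlgebra.ιMulti A d v := by
    intro v
    simp [tensorPowerToExteriorPower]
  rw [← Submodule.coe_eq_zero]
  push_cast
  have hb' : ∀ m, b (Equiv.swap i j m) = b m := by
    intro m
    rcases eq_or_ne m i with rfl | hmi
    · rw [Equiv.swap_apply_left, hb]
    rcases eq_or_ne m j with rfl | hmj
    · rw [Equiv.swap_apply_right, hb]
    · rw [Equiv.swap_apply_of_ne_of_ne hmi hmj]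
  refine Finset.sum_ninvolution (fun K => fun l => K (Equiv.swap i j l)) ?_ ?_
    (fun _ => Finset.mem_univ _) ?_
  · intro K
    show (((tensorPowerToExteriorPower A B d) (c K • PiTensorProduct.tprod A
        (fun l => f (K l) * b l)) : ⋀[A]^d B) : ExteriorAlgebra A B) +
      (((tensorPowerToExteriorPower A B d) (c (fun l => K (Equiv.swap i j l)) •
        PiTensorProduct.tprod A (fun l => f (K (Equiv.swap i j l)) * b l)) : ⋀[A]^d B) :
        ExteriorAlgebra A B) = 0
    rw [map_smul, map_smul, Submodule.coe_smul, Submodule.coe_smul, hπ, hπ,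
      hc (Equiv.swap i j) K]
    have hvec : (fun l => f (K (Equiv.swap i j l)) * b l) =
        (fun l => f (K l) * b l) ∘ Equiv.swap i j := by
      funext l
      simp [Function.comp, hb' l]
    rw [hvec, ← smul_add,
      AlternatingMap.map_add_swap (ExteriorAlgebra.ιMulti A d (M := B)) _ hij, smul_zero]
  · intro K hK
    by_contra hfix
    apply hK
    have hKij : K i = K j := by
      have := congrFun hfix i
      simpa [Equiv.swap_apply_left] using this.symm
    show (((tensorPowerToExteriorPower A B d) (c K • PiTensorProduct.tprod A
        (fun l => f (K l) * b l)) : ⋀[A]^d B) : ExteriorAlgebra A B) = 0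
    rw [map_smul, Submodule.coe_smul, hπ]
    have : (ExteriorAlgebra.ιMulti A d (fun l => f (K l) * b l)) = 0 := by
      refine AlternatingMap.map_eq_zero_of_eq _ _ (i := i) (j := j) ?_ hij
      rw [hKij, hb]
    rw [this, smul_zero]
  · intro K
    funext l
    simp [Equiv.swap_apply_self]

end Key

/-- Let `A` be a commutative ring, `d` a positive integer, and `B` a commutative
`A`-algebra which is finite locally free of rank `d` as an `A`-module. Let `I` be the kernel of
the canonical `A`-linear map `π : B^{⊗d} → ⋀^d_A B`. Then `I` is stable under multiplication by
`S_d`-invariant elements; consequently multiplication in `B^{⊗d}` induces an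
`S^d_A(B)`-module structure on `⋀^d_A B` for which `π` is `S^d_A(B)`-linear. -/
theorem ker_tensorPowerToExteriorPower_stable_under_invariants
    (A : Type) [CommRing A] (d : ℕ) (hd : 0 < d)
    (B : Type) [CommRing B] [Algebra A B] [Module.Finite A B] [Module.Projective A B]
    (hrank : ∀ p : PrimeSpectrum A, Module.rankAtStalk B p = d)
    (s : ⨂[A] (_ : Fin d), B)
    (hs : ∀ σ : Equiv.Perm (Fin d), PiTensorProduct.reindex A (fun _ : Fin d => B) σ s = s) :
    (∀ x, x ∈ LinearMap.ker (tensorPowerToExteriorPower A B d) →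
      s * x ∈ LinearMap.ker (tensorPowerToExteriorPower A B d)) ∧
    (∀ x y, tensorPowerToExteriorPower A B d x = tensorPowerToExteriorPower A B d y →
      tensorPowerToExteriorPower A B d (s * x) = tensorPowerToExteriorPower A B d (s * y)) := by
  set π := tensorPowerToExteriorPower A B d with hπdef
  -- the alternating map `b ↦ π (s * ⊗ b)`
  let F : B [⋀^Fin d]→ₗ[A] (⋀[A]^d B) :=
    { toMultilinearMap :=
        (π ∘ₗ LinearMap.mulLeft A s).compMultilinearMap (PiTensorProduct.tprod A)
      map_eq_zero_of_eq' := fun v i j h hij => by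
        simpa using key_alternating s hs v hij h }
  let fam : ∀ i : ℕ, B [⋀^Fin i]→ₗ[A] (⋀[A]^d B) :=
    Function.update (fun i => (0 : B [⋀^Fin i]→ₗ[A] (⋀[A]^d B))) d F
  let L : ExteriorAlgebra A B →ₗ[A] (⋀[A]^d B) := ExteriorAlgebra.liftAlternating fam
  have key2 : ∀ x, π (s * x) = L ((π x : ⋀[A]^d B) : ExteriorAlgebra A B) := by
    intro x
    induction x using PiTensorProduct.induction_on with
    | smul_tprod a v =>
      rw [mul_smul_comm, map_smul, map_smul, Submodule.coe_smul, map_smul]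
      congr 1
      have hπv : ((π (PiTensorProduct.tprod A v) : ⋀[A]^d B) : ExteriorAlgebra A B) =
          ExteriorAlgebra.ιMulti A d v := by
        simp [hπdef, tensorPowerToExteriorPower]
      rw [hπv]
      rw [show L (ExteriorAlgebra.ιMulti A d v) = fam d v from
        ExteriorAlgebra.liftAlternating_apply_ιMulti fam v]
      have hfamd : fam d = F := by
        simp only [fam, Function.update_self]
      rw [hfamd]
      rfl
    | add x y hx hy =>
      rw [mul_add, map_add, map_add, Submodule.coe_add, map_add, hx, hy]
  constructor
  · intro x hx
    rw [LinearMap.mem_ker] at hx ⊢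
    rw [key2, hx]
    simp
  · intro x y hxy
    rw [key2, key2, hxy]
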